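/- For every X ∈ 𝓕 and every direction Z ∈ 𝓕, the Fréchet derivative of the composite map C∘𝒜 at X in direction Z equals (9/4)B − (3/2)(BW + WB) + (1/4)(BW² + WBW + W²B), where B = Xᵀφ(Z) + Zᵀφ(X) and W = Xᵀφ(X). -/

import Mathlib

open Matrix

attribute [local instance] Matrix.frobeniusNormedAddCommGroup Matrix.frobeniusNormedSpace

/-- Frobenius inner product `⟨A, B⟩ = tr(AᵀB)`. -/
noncomputable def frobInner {n p : ℕ} (A B : Matrix (Fin n) (Fin p) ℝ) : ℝ :=
  (Aᵀ * B).trace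

/-- The constraint map `C(X) = Xᵀ φ(X) − I_p`. -/
noncomputable def Cmap {n p : ℕ}
    (φ : Matrix (Fin n) (Fin p) ℝ →ₗ[ℝ] Matrix (Fin n) (Fin p) ℝ)
    (X : Matrix (Fin n) (Fin p) ℝ) : Matrix (Fin p) (Fin p) ℝ :=
  Xᵀ * φ X - 1

/-- The constraint dissolving operator `𝒜(X) = (3/2)X − (1/2)X φ(X)ᵀ X`. -/
noncomputable def Amap {n p : ℕ}
    (φ : Matrix (Fin n) (Fin p) ℝ →ₗ[ℝ] Matrix (Fin n) (Fin p) ℝ)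
    (X : Matrix (Fin n) (Fin p) ℝ) : Matrix (Fin n) (Fin p) ℝ :=
  (3/2 : ℝ) • X - (1/2 : ℝ) • (X * (φ X)ᵀ * X)

/-- `𝒢 = span{X₁ᵀ X₂ : X₁, X₂ ∈ 𝓕}`. -/
noncomputable def Gspan {n p : ℕ} (𝓕 : Submodule ℝ (Matrix (Fin n) (Fin p) ℝ)) :
    Submodule ℝ (Matrix (Fin p) (Fin p) ℝ) :=
  Submodule.span ℝ {T | ∃ X₁ ∈ 𝓕, ∃ X₂ ∈ 𝓕, T = X₁ᵀ * X₂}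

/-- Matrix multiplication as a continuous bilinear map. -/
noncomputable def mulCLM (a b c : ℕ) :
    Matrix (Fin a) (Fin b) ℝ →L[ℝ] Matrix (Fin b) (Fin c) ℝ →L[ℝ] Matrix (Fin a) (Fin c) ℝ :=
  LinearMap.toContinuousLinearMap
    { toFun := fun A => LinearMap.toContinuousLinearMap
        { toFun := fun B => A * B
          map_add' := fun B C => Matrix.mul_add A B C
          map_smul' := fun r B => (Matrix.mul_smul A r B) }
      map_add' := fun A B => by ext C; simp [Matrix.add_mul]
      map_smul' := fun r A => by ext C; simp [Matrix.smul_mul] }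

@[simp] lemma mulCLM_apply {a b c : ℕ} (A : Matrix (Fin a) (Fin b) ℝ)
    (B : Matrix (Fin b) (Fin c) ℝ) : mulCLM a b c A B = A * B := rfl

/-- Matrix transpose as a continuous linear map. -/
noncomputable def transCLM (a b : ℕ) :
    Matrix (Fin a) (Fin b) ℝ →L[ℝ] Matrix (Fin b) (Fin a) ℝ :=
  LinearMap.toContinuousLinearMap
    { toFun := fun A => Aᵀ
      map_add' := fun A B => Matrix.transpose_add A B
      map_smul' := fun r A => Matrix.transpose_smul r A }

@[simp] lemma transCLM_apply {a b : ℕ} (A : Matrix (Fin a) (Fin b) ℝ) :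
    transCLM a b A = Aᵀ := rfl

theorem stmt_5 {n p : ℕ} (hn : 0 < n) (hp : 0 < p)
    (φ : Matrix (Fin n) (Fin p) ℝ →ₗ[ℝ] Matrix (Fin n) (Fin p) ℝ)
    (𝓕 : Submodule ℝ (Matrix (Fin n) (Fin p) ℝ))
    (ψ : Matrix (Fin p) (Fin p) ℝ →ₗ[ℝ] Matrix (Fin p) (Fin p) ℝ)
    (hφ𝓕 : ∀ X ∈ 𝓕, φ X ∈ 𝓕)
    (hXT : ∀ X ∈ 𝓕, ∀ T ∈ Gspan 𝓕, X * T ∈ 𝓕)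
    (hφsa : ∀ A B : Matrix (Fin n) (Fin p) ℝ, frobInner (φ A) B = frobInner A (φ B))
    (hψG : ∀ T ∈ Gspan 𝓕, ψ T ∈ Gspan 𝓕)
    (hφψ : ∀ X ∈ 𝓕, ∀ T ∈ Gspan 𝓕, φ (X * T) = φ X * ψ T)
    (hψφ : ∀ X ∈ 𝓕, ψ ((φ X)ᵀ * X) = Xᵀ * φ X)
    (X : Matrix (Fin n) (Fin p) ℝ) (hX : X ∈ 𝓕) :
    ∃ D : Matrix (Fin n) (Fin p) ℝ →L[ℝ] Matrix (Fin p) (Fin p) ℝ,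
      HasFDerivAt (fun Y => Cmap φ (Amap φ Y)) D X ∧
      ∀ Z ∈ 𝓕,
        D Z = (9/4 : ℝ) • (Xᵀ * φ Z + Zᵀ * φ X)
          - (3/2 : ℝ) • ((Xᵀ * φ Z + Zᵀ * φ X) * (Xᵀ * φ X)
              + (Xᵀ * φ X) * (Xᵀ * φ Z + Zᵀ * φ X))
          + (1/4 : ℝ) • ((Xᵀ * φ Z + Zᵀ * φ X) * ((Xᵀ * φ X) * (Xᵀ * φ X))
              + (Xᵀ * φ X) * (Xᵀ * φ Z + Zᵀ * φ X) * (Xᵀ * φ X)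
              + ((Xᵀ * φ X) * (Xᵀ * φ X)) * (Xᵀ * φ Z + Zᵀ * φ X)) := by
  classical
  set φC := LinearMap.toContinuousLinearMap φ with hφC
  have hφ' : HasFDerivAt (fun Y => φ Y) φC X := φC.hasFDerivAt
  have hid : HasFDerivAt (fun Y : Matrix (Fin n) (Fin p) ℝ => Y)
      (ContinuousLinearMap.id ℝ _) X := hasFDerivAt_id X
  have hφt : HasFDerivAt (fun Y => (φ Y)ᵀ) ((transCLM n p).comp φC) X :=
    (transCLM n p).hasFDerivAt.comp X hφ'
  have h1 : HasFDerivAt (fun Y => Y * (φ Y)ᵀ) _ X :=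
    (mulCLM n p n).hasFDerivAt_of_bilinear hid hφt
  have h2 : HasFDerivAt (fun Y => Y * (φ Y)ᵀ * Y) _ X :=
    (mulCLM n n p).hasFDerivAt_of_bilinear h1 hid
  have hA : HasFDerivAt (Amap φ) _ X := (hid.const_smul (3/2:ℝ)).sub (h2.const_smul (1/2:ℝ))
  have hAT : HasFDerivAt (fun Y => (Amap φ Y)ᵀ) _ X := (transCLM n p).hasFDerivAt.comp X hA
  have hφA : HasFDerivAt (fun Y => φ (Amap φ Y)) _ X := φC.hasFDerivAt.comp X hA
  have hmul : HasFDerivAt (fun Y => (Amap φ Y)ᵀ * φ (Amap φ Y)) _ X :=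
    (mulCLM p n p).hasFDerivAt_of_bilinear hAT hφA
  have hF : HasFDerivAt (fun Y => (Amap φ Y)ᵀ * φ (Amap φ Y) - 1) _ X := hmul.sub_const 1
  refine ⟨_, hF, ?_⟩
  intro Z hZ
  -- membership facts
  have hgen : ∀ Y₁ ∈ 𝓕, ∀ Y₂ ∈ 𝓕, Y₁ᵀ * Y₂ ∈ Gspan 𝓕 := fun Y₁ h₁ Y₂ h₂ =>
    Submodule.subset_span ⟨Y₁, h₁, Y₂, h₂, rfl⟩
  have hφX := hφ𝓕 X hX
  have hφZ := hφ𝓕 Z hZ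
  -- polarization identity for ψ
  have harg : (φ Z)ᵀ * X + (φ X)ᵀ * Z
      = (φ (X + Z))ᵀ * (X + Z) - (φ X)ᵀ * X - (φ Z)ᵀ * Z := by
    simp only [map_add, Matrix.transpose_add, Matrix.add_mul, Matrix.mul_add]
    abel
  have hpol : ψ ((φ Z)ᵀ * X + (φ X)ᵀ * Z) = Xᵀ * φ Z + Zᵀ * φ X := by
    rw [harg, map_sub, map_sub, hψφ _ (𝓕.add_mem hX hZ), hψφ X hX, hψφ Z hZ]
    simp only [map_add, Matrix.transpose_add, Matrix.add_mul, Matrix.mul_add]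
    abel
  have K1 : φ (X * ((φ X)ᵀ * X)) = φ X * (Xᵀ * φ X) := by
    rw [hφψ X hX _ (hgen _ hφX _ hX), hψφ X hX]
  have K2 : φ (Z * ((φ X)ᵀ * X)) = φ Z * (Xᵀ * φ X) := by
    rw [hφψ Z hZ _ (hgen _ hφX _ hX), hψφ X hX]
  have K3a : φ (X * ((φ Z)ᵀ * X)) = φ X * ψ ((φ Z)ᵀ * X) :=
    hφψ X hX _ (hgen _ hφZ _ hX)
  have K3b : φ (X * ((φ X)ᵀ * Z)) = φ X * ψ ((φ X)ᵀ * Z) :=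
    hφψ X hX _ (hgen _ hφX _ hZ)
  have hsub : ψ ((φ X)ᵀ * Z) = (Xᵀ * φ Z + Zᵀ * φ X) - ψ ((φ Z)ᵀ * X) := by
    rw [eq_sub_iff_add_eq, ← map_add, add_comm ((φ X)ᵀ * Z), hpol]
  change (Amap φ X)ᵀ * φC ((3/2:ℝ) • Z - (1/2:ℝ) • (X * (φ X)ᵀ * Z
      + (X * (φC Z)ᵀ + Z * (φ X)ᵀ) * X))
    + ((3/2:ℝ) • Z - (1/2:ℝ) • (X * (φ X)ᵀ * Z
      + (X * (φC Z)ᵀ + Z * (φ X)ᵀ) * X))ᵀ * φ (Amap φ X) = _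
  simp only [ContinuousLinearMap.add_apply, ContinuousLinearMap.precompR_apply,
    ContinuousLinearMap.precompL_apply, ContinuousLinearMap.comp_apply,
    ContinuousLinearMap.sub_apply, ContinuousLinearMap.smul_apply,
    ContinuousLinearMap.id_apply, ContinuousLinearMap.coe_smul', Pi.smul_apply,
    ContinuousLinearMap.compL_apply, ContinuousLinearMap.coe_comp', Function.comp_apply,
    mulCLM_apply, transCLM_apply, hφC, LinearMap.coe_toContinuousLinearMap']
  simp only [Amap, Matrix.mul_assoc, Matrix.add_mul, map_sub, _root_.map_smul, map_add,
    K1, K2, K3a, K3b, hsub]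
  simp only [Matrix.transpose_mul, Matrix.transpose_smul, Matrix.transpose_sub,
    Matrix.transpose_add, Matrix.transpose_transpose, Matrix.sub_mul, Matrix.mul_sub,
    Matrix.add_mul, Matrix.mul_add, Matrix.smul_mul, Matrix.mul_smul, smul_sub, smul_add,
    smul_smul, Matrix.mul_assoc]
  module
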